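/- Let Y be a symmetric real random variable with smooth probability density, ‖Y‖_{L²}² = E[Y²] = 1 and E[Y⁴] = 3, and suppose its density η can be written as η(x) = ∫_0^∞ e^{−t x²} μ(dt) for a positive Borel measure μ on [0,∞). Then Y is standard normal, i.e. η(x) = (1/√(2π)) e^{−x²/2}. -/

import Mathlib

open MeasureTheory Real Set
open scoped ENNReal


lemma integrable_sq_mul_gauss {b : ℝ} (hb : 0 < b) :
    Integrable fun x : ℝ => x ^ 2 * Real.exp (-b * x ^ 2) := by
  have h := integrable_rpow_mul_exp_neg_mul_sq hb (s := ((2 : ℕ) : ℝ)) (by norm_num)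
  simpa [Real.rpow_natCast] using h

lemma integrable_quart_mul_gauss {b : ℝ} (hb : 0 < b) :
    Integrable fun x : ℝ => x ^ 4 * Real.exp (-b * x ^ 2) := by
  have h := integrable_rpow_mul_exp_neg_mul_sq hb (s := ((4 : ℕ) : ℝ)) (by norm_num)
  refine h.congr (Filter.Eventually.of_forall fun x => ?_)
  show x ^ ((4:ℕ):ℝ) * Real.exp (-b * x ^ 2) = x ^ (4:ℕ) * Real.exp (-b * x ^ 2)
  rw [Real.rpow_natCast]


lemma integral_sq_mul_gauss {b : ℝ} (hb : 0 < b) :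
    ∫ x : ℝ, x ^ 2 * Real.exp (-b * x ^ 2) = Real.sqrt (π / b) * (1 / (2 * b)) := by
  have habs : ∫ x : ℝ, x ^ 2 * Real.exp (-b * x ^ 2)
      = 2 * ∫ x in Ioi (0:ℝ), x ^ 2 * Real.exp (-b * x ^ 2) := by
    rw [← integral_comp_abs (f := fun x => x ^ 2 * Real.exp (-b * x ^ 2))]
    congr 1; funext x
    show x ^ 2 * Real.exp (-b * x ^ 2) = |x| ^ 2 * Real.exp (-b * |x| ^ 2)
    rw [sq_abs]
  have hIoi : ∫ x in Ioi (0:ℝ), x ^ 2 * Real.exp (-b * x ^ 2)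
      = b ^ (-((2:ℝ) + 1) / 2) * (1 / 2) * Real.Gamma (((2:ℝ) + 1) / 2) := by
    rw [← integral_rpow_mul_exp_neg_mul_rpow two_pos (by norm_num : (-1:ℝ) < 2) hb]
    refine setIntegral_congr_fun measurableSet_Ioi (fun x hx => ?_)
    rw [← Real.rpow_natCast x 2]; norm_num
  have hgamma : Real.Gamma (((2:ℝ) + 1) / 2) = Real.sqrt π / 2 := by
    rw [show ((2:ℝ) + 1) / 2 = 1/2 + 1 by norm_num, Real.Gamma_add_one (by norm_num),
      Real.Gamma_one_half_eq]
    ring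
  have hpow : b ^ (-((2:ℝ) + 1) / 2) = (Real.sqrt b)⁻¹ * b⁻¹ := by
    rw [show (-((2:ℝ) + 1) / 2) = -(1/2) + (-1) by norm_num, Real.rpow_add hb,
      Real.rpow_neg hb.le, ← Real.sqrt_eq_rpow, Real.rpow_neg_one]
  have hsb : Real.sqrt b ≠ 0 := (Real.sqrt_pos.mpr hb).ne'
  rw [habs, hIoi, hgamma, hpow, Real.sqrt_div pi_pos.le]
  field_simp

lemma integral_quart_mul_gauss {b : ℝ} (hb : 0 < b) :
    ∫ x : ℝ, x ^ 4 * Real.exp (-b * x ^ 2) = Real.sqrt (π / b) * (3 / (4 * b ^ 2)) := by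
  have habs : ∫ x : ℝ, x ^ 4 * Real.exp (-b * x ^ 2)
      = 2 * ∫ x in Ioi (0:ℝ), x ^ 4 * Real.exp (-b * x ^ 2) := by
    rw [← integral_comp_abs (f := fun x => x ^ 4 * Real.exp (-b * x ^ 2))]
    congr 1; funext x
    show x ^ 4 * Real.exp (-b * x ^ 2) = |x| ^ 4 * Real.exp (-b * |x| ^ 2)
    rw [pow_abs, abs_of_nonneg (by positivity : (0:ℝ) ≤ x ^ 4), sq_abs]
  have hIoi : ∫ x in Ioi (0:ℝ), x ^ 4 * Real.exp (-b * x ^ 2)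
      = b ^ (-((4:ℝ) + 1) / 2) * (1 / 2) * Real.Gamma (((4:ℝ) + 1) / 2) := by
    rw [← integral_rpow_mul_exp_neg_mul_rpow two_pos (by norm_num : (-1:ℝ) < 4) hb]
    refine setIntegral_congr_fun measurableSet_Ioi (fun x hx => ?_)
    rw [← Real.rpow_natCast x 2, ← Real.rpow_natCast x 4]; norm_num
  have hgamma : Real.Gamma (((4:ℝ) + 1) / 2) = 3 * Real.sqrt π / 4 := by
    rw [show ((4:ℝ) + 1) / 2 = (1/2 + 1) + 1 by norm_num, Real.Gamma_add_one (by norm_num),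
      Real.Gamma_add_one (by norm_num), Real.Gamma_one_half_eq]
    ring
  have hpow : b ^ (-((4:ℝ) + 1) / 2) = (Real.sqrt b)⁻¹ * (b ^ 2)⁻¹ := by
    rw [show (-((4:ℝ) + 1) / 2) = -(1/2) + (-2) by norm_num, Real.rpow_add hb,
      Real.rpow_neg hb.le, ← Real.sqrt_eq_rpow, Real.rpow_neg hb.le,
      show ((2:ℝ)) = ((2:ℕ):ℝ) by norm_num, Real.rpow_natCast]
  have hsb : Real.sqrt b ≠ 0 := (Real.sqrt_pos.mpr hb).ne'
  rw [habs, hIoi, hgamma, hpow, Real.sqrt_div pi_pos.le]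
  field_simp




open MeasureTheory

/-- If a probability density `η` on `ℝ` has the representation
`η(x) = ∫_0^∞ e^{−t x²} μ(dt)` for a positive Borel measure `μ` on `[0,∞)`, and the
associated second and fourth moments are `1` and `3`, then `η` is the standard
Gaussian density. -/
theorem stmt_9 (μ : Measure ℝ) [IsFiniteMeasure μ] (hsupp : μ (Set.Iio 0) = 0)
    (η : ℝ → ℝ) (hrep : ∀ x : ℝ, η x = ∫ t, Real.exp (-t * x ^ 2) ∂μ)
    (hprob : ∫ x, η x = 1)
    (h2 : ∫ x, x ^ 2 * η x = 1)
    (h4 : ∫ x, x ^ 4 * η x = 3) :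
    ∀ x : ℝ, η x = (Real.sqrt (2 * Real.pi))⁻¹ * Real.exp (-x ^ 2 / 2) := by
  -- a.e. nonnegativity of t
  have h_ae0 : ∀ᵐ t ∂μ, 0 ≤ t := by
    rw [ae_iff]
    simp only [not_le]; exact hsupp
  -- integrability in t
  have h_int_t : ∀ x : ℝ, Integrable (fun t => Real.exp (-t * x ^ 2)) μ := by
    intro x
    refine Integrable.mono' (integrable_const 1)
      ((Real.continuous_exp.comp ((continuous_id.neg).mul continuous_const)).aestronglyMeasurable) ?_
    filter_upwards [h_ae0] with t ht
    rw [Real.norm_eq_abs, abs_of_nonneg (Real.exp_pos _).le]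
    exact Real.exp_le_one_iff.mpr (by nlinarith [sq_nonneg x])
  have hη_nonneg : ∀ x : ℝ, 0 ≤ η x := fun x =>
    (hrep x).symm ▸ integral_nonneg fun t => (Real.exp_pos _).le
  -- general Tonelli swap
  have swap : ∀ w : ℝ → ℝ, Continuous w → (∀ x, 0 ≤ w x) →
      Integrable (fun x => w x * η x) →
      ∫⁻ t, (∫⁻ x, ENNReal.ofReal (w x * Real.exp (-t * x ^ 2))) ∂μ
        = ENNReal.ofReal (∫ x, w x * η x) := by
    intro w hw hw0 hint
    have hmeas : Measurable fun p : ℝ × ℝ =>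
        ENNReal.ofReal (w p.1 * Real.exp (-p.2 * p.1 ^ 2)) :=
      (ENNReal.measurable_ofReal.comp
        (((hw.comp continuous_fst).mul (Real.continuous_exp.comp
          ((continuous_snd.neg).mul (continuous_fst.pow 2)))).measurable))
    have hswap := lintegral_lintegral_swap (μ := (volume : Measure ℝ)) (ν := μ)
      (f := fun x t => ENNReal.ofReal (w x * Real.exp (-t * x ^ 2)))
      hmeas.aemeasurable
    rw [← hswap]
    have hinner : ∀ x : ℝ, ∫⁻ t, ENNReal.ofReal (w x * Real.exp (-t * x ^ 2)) ∂μ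
        = ENNReal.ofReal (w x * η x) := by
      intro x
      rw [← ofReal_integral_eq_lintegral_ofReal ((h_int_t x).const_mul (w x))
        (Filter.Eventually.of_forall fun t => mul_nonneg (hw0 x) (Real.exp_pos _).le),
        integral_const_mul, ← hrep]
    simp_rw [hinner]
    rw [← ofReal_integral_eq_lintegral_ofReal hint
      (Filter.Eventually.of_forall fun x => mul_nonneg (hw0 x) (hη_nonneg x))]
  -- integrability of the moments
  have hint0 : Integrable η := by
    by_contra h
    rw [integral_undef h] at hprob; norm_num at hprob
  have hint2 : Integrable (fun x => x ^ 2 * η x) := by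
    by_contra h
    rw [integral_undef h] at h2; norm_num at h2
  have hint4 : Integrable (fun x => x ^ 4 * η x) := by
    by_contra h
    rw [integral_undef h] at h4; norm_num at h4
  -- the three swapped identities
  have S0 : ∫⁻ t, (∫⁻ x, ENNReal.ofReal (Real.exp (-t * x ^ 2))) ∂μ = 1 := by
    have := swap (fun _ => 1) continuous_const (fun _ => zero_le_one) (by simpa using hint0)
    simpa [hprob] using this
  have S2 : ∫⁻ t, (∫⁻ x, ENNReal.ofReal (x ^ 2 * Real.exp (-t * x ^ 2))) ∂μ = 1 := by
    have := swap (fun x => x ^ 2) (continuous_pow 2) (fun x => sq_nonneg x) hint2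
    simpa [h2] using this
  have S4 : ∫⁻ t, (∫⁻ x, ENNReal.ofReal (x ^ 4 * Real.exp (-t * x ^ 2))) ∂μ = 3 := by
    have := swap (fun x => x ^ 4) (continuous_pow 4) (fun x => by positivity) hint4
    rw [h4] at this
    rw [this]
    norm_num
  -- inner integrals are infinite for t ≤ 0
  have key0 : ∀ t : ℝ, t ≤ 0 → (∫⁻ x : ℝ, ENNReal.ofReal (Real.exp (-t * x ^ 2))) = ⊤ := by
    intro t ht
    refine top_le_iff.mp ?_
    have h1 : (∫⁻ (_ : ℝ), (1 : ℝ≥0∞)) ≤ ∫⁻ x : ℝ, ENNReal.ofReal (Real.exp (-t * x ^ 2)) := by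
      refine lintegral_mono fun x => ?_
      rw [← ENNReal.ofReal_one]
      exact ENNReal.ofReal_le_ofReal (Real.one_le_exp (by nlinarith [sq_nonneg x]))
    simpa [lintegral_one, Real.volume_univ] using h1
  -- μ gives no mass to (-∞, 0]
  have hμ0 : μ (Iic (0:ℝ)) = 0 := by
    by_contra h
    have hle : ∫⁻ t in Iic (0:ℝ), (∫⁻ x, ENNReal.ofReal (Real.exp (-t * x ^ 2))) ∂μ
        ≤ 1 := S0 ▸ setLIntegral_le_lintegral _ _
    have heq : ∫⁻ t in Iic (0:ℝ), (∫⁻ x, ENNReal.ofReal (Real.exp (-t * x ^ 2))) ∂μ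
        = ⊤ := by
      rw [setLIntegral_congr_fun measurableSet_Iic
        (fun t (ht : t ∈ Iic (0:ℝ)) => key0 t ht), lintegral_const]
      simp only [Measure.restrict_apply_univ]
      exact ENNReal.top_mul h
    rw [heq] at hle
    exact absurd hle (by simp)
  have h_pos : ∀ᵐ t ∂μ, 0 < t := by
    rw [ae_iff]
    simp only [not_lt]; exact hμ0
  -- the three moment identities for the mixing measure
  have E0 : ∫⁻ t, ENNReal.ofReal (Real.sqrt (π / t)) ∂μ = 1 := by
    rw [← S0]
    refine lintegral_congr_ae ?_
    filter_upwards [h_pos] with t ht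
    rw [← ofReal_integral_eq_lintegral_ofReal (integrable_exp_neg_mul_sq ht)
      (Filter.Eventually.of_forall fun x => (Real.exp_pos _).le), integral_gaussian]
  have E2 : ∫⁻ t, ENNReal.ofReal (Real.sqrt (π / t) * (1 / (2 * t))) ∂μ = 1 := by
    rw [← S2]
    refine lintegral_congr_ae ?_
    filter_upwards [h_pos] with t ht
    rw [← ofReal_integral_eq_lintegral_ofReal (integrable_sq_mul_gauss ht)
      (Filter.Eventually.of_forall fun x => by positivity), integral_sq_mul_gauss ht]
  have E4 : ∫⁻ t, ENNReal.ofReal (Real.sqrt (π / t) * (1 / (2 * t)) ^ 2) ∂μ = 1 := by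
    have hS4' : ∫⁻ t, (3 : ℝ≥0∞) * ENNReal.ofReal (Real.sqrt (π / t) * (1 / (2 * t)) ^ 2) ∂μ
        = 3 := by
      have hcongr : ∫⁻ t, (3 : ℝ≥0∞) * ENNReal.ofReal (Real.sqrt (π / t) * (1 / (2 * t)) ^ 2) ∂μ
          = ∫⁻ t, (∫⁻ x, ENNReal.ofReal (x ^ 4 * Real.exp (-t * x ^ 2))) ∂μ := by
        refine lintegral_congr_ae ?_
        filter_upwards [h_pos] with t ht
        rw [← ofReal_integral_eq_lintegral_ofReal (integrable_quart_mul_gauss ht)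
          (Filter.Eventually.of_forall fun x => by positivity), integral_quart_mul_gauss ht]
        rw [show Real.sqrt (π / t) * (3 / (4 * t ^ 2))
            = 3 * (Real.sqrt (π / t) * (1 / (2 * t)) ^ 2) by field_simp; ring]
        rw [ENNReal.ofReal_mul (by norm_num : (0:ℝ) ≤ 3)]
        norm_num
      rw [hcongr, S4]
    rw [lintegral_const_mul' _ _ (by norm_num : (3 : ℝ≥0∞) ≠ ⊤)] at hS4'
    have h3 : (3 : ℝ≥0∞) ≠ 0 := by norm_num
    have h3' : (3 : ℝ≥0∞) ≠ ⊤ := by norm_num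
    calc ∫⁻ t, ENNReal.ofReal (Real.sqrt (π / t) * (1 / (2 * t)) ^ 2) ∂μ
        = 3⁻¹ * (3 * ∫⁻ t, ENNReal.ofReal (Real.sqrt (π / t) * (1 / (2 * t)) ^ 2) ∂μ) := by
          rw [← mul_assoc, ENNReal.inv_mul_cancel h3 h3', one_mul]
      _ = 3⁻¹ * 3 := by rw [hS4']
      _ = 1 := by rw [ENNReal.inv_mul_cancel h3 h3']
  -- variance argument: μ is concentrated at t = 1/2
  have key : ∀ᵐ t ∂μ, t = 1 / 2 := by
    have mG : Measurable fun t : ℝ =>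
        ENNReal.ofReal (Real.sqrt (π / t) * ((1 / (2 * t)) ^ 2 + 1)) := by
      refine ENNReal.measurable_ofReal.comp (Measurable.mul ?_ ?_)
      · exact Real.continuous_sqrt.measurable.comp (measurable_const.div measurable_id)
      · exact ((measurable_const.div (measurable_const.mul measurable_id)).pow_const 2).add
          measurable_const
    have intF : ∫⁻ t, ENNReal.ofReal (Real.sqrt (π / t) * (2 * (1 / (2 * t)))) ∂μ = 2 := by
      have h1 : ∫⁻ t, ENNReal.ofReal (Real.sqrt (π / t) * (2 * (1 / (2 * t)))) ∂μ
          = ∫⁻ t, (2:ℝ≥0∞) * ENNReal.ofReal (Real.sqrt (π / t) * (1 / (2 * t))) ∂μ := by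
        refine lintegral_congr fun t => ?_
        show ENNReal.ofReal (Real.sqrt (π / t) * (2 * (1 / (2 * t))))
          = 2 * ENNReal.ofReal (Real.sqrt (π / t) * (1 / (2 * t)))
        rw [show Real.sqrt (π / t) * (2 * (1 / (2 * t)))
            = 2 * (Real.sqrt (π / t) * (1 / (2 * t))) by ring,
          ENNReal.ofReal_mul (by norm_num : (0:ℝ) ≤ 2)]
        norm_num
      rw [h1, lintegral_const_mul' _ _ (by norm_num : (2 : ℝ≥0∞) ≠ ⊤), E2]
      norm_num
    have intG : ∫⁻ t, ENNReal.ofReal (Real.sqrt (π / t) * ((1 / (2 * t)) ^ 2 + 1)) ∂μ = 2 := by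
      have h1 : ∫⁻ t, ENNReal.ofReal (Real.sqrt (π / t) * ((1 / (2 * t)) ^ 2 + 1)) ∂μ
          = ∫⁻ t, (ENNReal.ofReal (Real.sqrt (π / t) * (1 / (2 * t)) ^ 2)
              + ENNReal.ofReal (Real.sqrt (π / t))) ∂μ := by
        refine lintegral_congr fun t => ?_
        show ENNReal.ofReal (Real.sqrt (π / t) * ((1 / (2 * t)) ^ 2 + 1))
          = ENNReal.ofReal (Real.sqrt (π / t) * (1 / (2 * t)) ^ 2)
              + ENNReal.ofReal (Real.sqrt (π / t))
        rw [mul_add, mul_one, ENNReal.ofReal_add (by positivity) (Real.sqrt_nonneg _)]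
      rw [h1, lintegral_add_left (by
        exact ENNReal.measurable_ofReal.comp ((Real.continuous_sqrt.measurable.comp
          (measurable_const.div measurable_id)).mul
          ((measurable_const.div (measurable_const.mul measurable_id)).pow_const 2))), E4, E0]
      norm_num
    have hle : (fun t : ℝ => ENNReal.ofReal (Real.sqrt (π / t) * (2 * (1 / (2 * t)))))
        ≤ᵐ[μ] fun t : ℝ => ENNReal.ofReal (Real.sqrt (π / t) * ((1 / (2 * t)) ^ 2 + 1)) := by
      filter_upwards [h_pos] with t ht
      refine ENNReal.ofReal_le_ofReal ?_
      have h1 : 2 * (1 / (2 * t)) ≤ (1 / (2 * t)) ^ 2 + 1 := by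
        nlinarith [sq_nonneg (1 / (2 * t) - 1)]
      exact mul_le_mul_of_nonneg_left h1 (Real.sqrt_nonneg _)
    have hFG := ae_eq_of_ae_le_of_lintegral_le hle (by rw [intF]; norm_num) mG.aemeasurable
        (by rw [intF, intG])
    filter_upwards [hFG, h_pos] with t hfg ht
    have hs : 0 < Real.sqrt (π / t) := Real.sqrt_pos.mpr (div_pos pi_pos ht)
    have heq : Real.sqrt (π / t) * (2 * (1 / (2 * t)))
        = Real.sqrt (π / t) * ((1 / (2 * t)) ^ 2 + 1) :=
      (ENNReal.ofReal_eq_ofReal_iff (by positivity) (by positivity)).mp hfg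
    have hc : 2 * (1 / (2 * t)) = (1 / (2 * t)) ^ 2 + 1 := mul_left_cancel₀ hs.ne' heq
    have ht' : t ≠ 0 := ht.ne'
    field_simp at hc
    have hsq : (2 * t - 1) ^ 2 = 0 := by nlinarith [hc]
    have h20 : 2 * t - 1 = 0 := pow_eq_zero_iff (n := 2) (by norm_num) |>.mp hsq
    linarith
  -- conclusion
  have hconst : ENNReal.ofReal (Real.sqrt (2 * π)) * μ Set.univ = 1 := by
    rw [← E0]
    have h1 : ∫⁻ t, ENNReal.ofReal (Real.sqrt (π / t)) ∂μ
        = ∫⁻ _t, ENNReal.ofReal (Real.sqrt (2 * π)) ∂μ :=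
      lintegral_congr_ae (key.mono fun t ht => by
        simp only [ht]
        rw [show π / (1/2 : ℝ) = 2 * π by ring])
    rw [h1, lintegral_const]
  have hmass : Real.sqrt (2 * π) * (μ Set.univ).toReal = 1 := by
    have := congrArg ENNReal.toReal hconst
    rwa [ENNReal.toReal_mul, ENNReal.toReal_ofReal (Real.sqrt_nonneg _),
      ENNReal.toReal_one] at this
  have hμuniv : (μ Set.univ).toReal = (Real.sqrt (2 * π))⁻¹ :=
    eq_inv_of_mul_eq_one_left (by rw [mul_comm]; exact hmass)
  intro x
  have hη : η x = (μ Set.univ).toReal * Real.exp (-(1/2 : ℝ) * x ^ 2) := by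
    have h1 : ∫ t, Real.exp (-t * x ^ 2) ∂μ
        = ∫ _t, Real.exp (-(1/2 : ℝ) * x ^ 2) ∂μ :=
      integral_congr_ae (key.mono fun t ht => by simp only [ht])
    rw [hrep x, h1, integral_const, smul_eq_mul]; rfl
  rw [hη, hμuniv, show -x ^ 2 / 2 = -(1/2 : ℝ) * x ^ 2 by ring]
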